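/- Fix an injection f from the set P of formula variables into a set A' of term variables disjoint from A, and let tr be the translation from PDL_REwLA+ expressions over (A,P) to REwLA+ terms over A ⊔ A' defined by: tr(p) = f(p)ᵈ (where eᵈ := (eᵃ)ᵃ); tr(φ→ψ) = tr(φ)ᵃ + tr(ψ); tr(F) = 0; tr([e]φ) = (tr(e);tr(φ)ᵃ)ᵃ; tr(a) = a; tr(e;f) = tr(e);tr(f); tr(e+f) = tr(e)+tr(f); tr(e⁺) = tr(e)⁺; tr(eᵃ) = tr(e)ᵃ; tr(e^{∩id}) = tr(e)^{∩id}; tr(e^{∩i̅d}) = tr(e)^{∩i̅d}; tr(φ?) = tr(φ). Then, for every PDL_REwLA+ formula φ over (A,P): the equation tr(φ) = 1 is valid on GRELfinlin if and only if the formula φ is valid on GRELfinlin. -/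

import Mathlib

/-! Statement 18: the translation `tr` from PDL_REwLA+ formulas into REwLA+ terms
preserves and reflects validity on GRELfinlin (as the equation `tr(φ) = 1`). -/

/-- A generalized structure over term variables `A` and formula variables `P`,
with universe `W`. -/
structure GStruct (A P W : Type) where
  U : W → W → Prop
  rel : A → W → W → Prop
  rel_sub : ∀ a x y, rel a x y → U x y
  val : P → W → Prop

/-- The universal relation is a finite linear order (on a nonempty finite universe). -/
def FinLin {A P W : Type} (S : GStruct A P W) : Prop :=
  Nonempty W ∧ Finite W ∧ (∀ x, S.U x x) ∧
    (∀ x y z, S.U x y → S.U y z → S.U x z) ∧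
    (∀ x y, S.U x y → S.U y x → x = y) ∧ (∀ x y, S.U x y ∨ S.U y x)

/-- The universal relation is a finite strict linear order
(on a nonempty finite universe). -/
def SFinLin {A P W : Type} (S : GStruct A P W) : Prop :=
  Nonempty W ∧ Finite W ∧ (∀ x, ¬ S.U x x) ∧
    (∀ x y z, S.U x y → S.U y z → S.U x z) ∧
    (∀ x y, x ≠ y → S.U x y ∨ S.U y x)
mutual
  /-- Formulas of PDL for REwLA+. -/
  inductive Fml (A P : Type) : Type where
    | pv : P → Fml A P
    | imp : Fml A P → Fml A P → Fml A P
    | fls : Fml A P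
    | box : Trm A P → Fml A P → Fml A P
  /-- Terms of PDL for REwLA+. -/
  inductive Trm (A P : Type) : Type where
    | tv : A → Trm A P
    | comp : Trm A P → Trm A P → Trm A P
    | union : Trm A P → Trm A P → Trm A P
    | plus : Trm A P → Trm A P
    | adom : Trm A P → Trm A P
    | capId : Trm A P → Trm A P
    | capNid : Trm A P → Trm A P
    | test : Fml A P → Trm A P
end

namespace Fml
/-- ¬φ := φ → F -/
def neg {A P : Type} (φ : Fml A P) : Fml A P := .imp φ .fls
/-- T := ¬F -/
def tru {A P : Type} : Fml A P := neg .fls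
/-- φ ∨ ψ := ¬φ → ψ -/
def or {A P : Type} (φ ψ : Fml A P) : Fml A P := .imp (neg φ) ψ
/-- φ ∧ ψ := ¬(¬φ ∨ ¬ψ) -/
def and {A P : Type} (φ ψ : Fml A P) : Fml A P := neg (or (neg φ) (neg ψ))
/-- φ ↔ ψ := (φ → ψ) ∧ (ψ → φ) -/
def iff {A P : Type} (φ ψ : Fml A P) : Fml A P := and (.imp φ ψ) (.imp ψ φ)
/-- ⟨e⟩φ := ¬[e]¬φ -/
def dia {A P : Type} (e : Trm A P) (φ : Fml A P) : Fml A P := neg (.box e (neg φ))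
end Fml

mutual
  /-- Semantics of PDL_REwLA+ formulas on a generalized structure. -/
  def semF {A P W : Type} (S : GStruct A P W) : Fml A P → W → Prop
    | .pv p, x => S.val p x
    | .imp φ ψ, x => semF S φ x → semF S ψ x
    | .fls, _ => False
    | .box e φ, x => ∀ y, semT S e x y → semF S φ y
  /-- Semantics of PDL_REwLA+ terms on a generalized structure. -/
  def semT {A P W : Type} (S : GStruct A P W) : Trm A P → W → W → Prop
    | .tv a, x, y => S.rel a x y
    | .comp e f, x, z => ∃ y, semT S e x y ∧ semT S f y z
    | .union e f, x, y => semT S e x y ∨ semT S f x y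
    | .plus e, x, y => Relation.TransGen (fun u v => semT S e u v) x y
    | .adom e, x, y => x = y ∧ ∀ z, ¬ semT S e x z
    | .capId e, x, y => semT S e x y ∧ x = y
    | .capNid e, x, y => semT S e x y ∧ x ≠ y
    | .test φ, x, y => x = y ∧ semF S φ x
end

/-- REwLA+ terms over term variables `B`. -/
inductive RE (B : Type) : Type where
  | var : B → RE B
  | one : RE B
  | zero : RE B
  | comp : RE B → RE B → RE B
  | union : RE B → RE B → RE B
  | plus : RE B → RE B
  | adom : RE B → RE B
  | capId : RE B → RE B
  | capNid : RE B → RE B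

/-- Relational semantics of REwLA+ terms given an interpretation `ρ`
of term variables. -/
def reSem {B W : Type} (ρ : B → W → W → Prop) : RE B → W → W → Prop
  | .var b => ρ b
  | .one => fun x y => x = y
  | .zero => fun _ _ => False
  | .comp e f => fun x z => ∃ y, reSem ρ e x y ∧ reSem ρ f y z
  | .union e f => fun x y => reSem ρ e x y ∨ reSem ρ f x y
  | .plus e => fun x y => Relation.TransGen (fun u v => reSem ρ e u v) x y
  | .adom e => fun x y => x = y ∧ ∀ z, ¬ reSem ρ e x z
  | .capId e => fun x y => reSem ρ e x y ∧ x = y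
  | .capNid e => fun x y => reSem ρ e x y ∧ x ≠ y

mutual
  /-- The translation of PDL_REwLA+ formulas into REwLA+ terms over `A ⊕ A'`,
  given an injection `f` of formula variables into the fresh term variables `A'`. -/
  def trF {A P A' : Type} (f : P → A') : Fml A P → RE (A ⊕ A')
    | .pv p => .adom (.adom (.var (Sum.inr (f p))))
    | .imp φ ψ => .union (.adom (trF f φ)) (trF f ψ)
    | .fls => .zero
    | .box e φ => .adom (.comp (trT f e) (.adom (trF f φ)))
  /-- The translation of PDL_REwLA+ terms into REwLA+ terms over `A ⊕ A'`. -/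
  def trT {A P A' : Type} (f : P → A') : Trm A P → RE (A ⊕ A')
    | .tv a => .var (Sum.inl a)
    | .comp e g => .comp (trT f e) (trT f g)
    | .union e g => .union (trT f e) (trT f g)
    | .plus e => .plus (trT f e)
    | .adom e => .adom (trT f e)
    | .capId e => .capId (trT f e)
    | .capNid e => .capNid (trT f e)
    | .test φ => trF f φ
end

/-- Derived structure over `A` from a structure over `A ⊕ A'`. -/
def derive {A P A' W : Type} (f : P → A') (S : GStruct (A ⊕ A') P W) : GStruct A P W where
  U := S.U
  rel a := S.rel (Sum.inl a)
  rel_sub a x y h := S.rel_sub (Sum.inl a) x y h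
  val p x := ∃ z, S.rel (Sum.inr (f p)) x z

theorem transGen_iff_of_iff {W : Type} {r s : W → W → Prop}
    (h : ∀ x y, r x y ↔ s x y) {x y : W} :
    Relation.TransGen r x y ↔ Relation.TransGen s x y := by
  constructor <;> intro hxy
  · exact Relation.TransGen.mono (fun a b hab => (h a b).1 hab) x y hxy
  · exact Relation.TransGen.mono (fun a b hab => (h a b).2 hab) x y hxy

mutual
  theorem trF_sem {A P A' W : Type} (f : P → A') (S : GStruct (A ⊕ A') P W)
      (φ : Fml A P) :
      ∀ x y, reSem S.rel (trF f φ) x y ↔ (x = y ∧ semF (derive f S) φ x) := by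
    intro x y
    cases φ with
    | pv p =>
        simp only [trF, reSem, semF, derive]
        constructor
        · rintro ⟨rfl, h⟩
          refine ⟨rfl, ?_⟩
          by_contra hn
          exact h x ⟨rfl, fun z hz => hn ⟨z, hz⟩⟩
        · rintro ⟨rfl, z, hz⟩
          exact ⟨rfl, fun w ⟨hw, hw2⟩ => hw2 z (hw ▸ hz)⟩
    | imp ψ χ =>
        simp only [trF, reSem, semF]
        constructor
        · rintro (⟨rfl, h⟩ | hχ)
          · exact ⟨rfl, fun hψ => absurd ((trF_sem f S ψ x x).2 ⟨rfl, hψ⟩) (h x)⟩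
          · obtain ⟨rfl, h⟩ := (trF_sem f S χ x y).1 hχ
            exact ⟨rfl, fun _ => h⟩
        · rintro ⟨rfl, h⟩
          by_cases hψ : semF (derive f S) ψ x
          · exact Or.inr ((trF_sem f S χ x x).2 ⟨rfl, h hψ⟩)
          · exact Or.inl ⟨rfl, fun z hz =>
              hψ (((trF_sem f S ψ x z).1 hz).1 ▸ ((trF_sem f S ψ x z).1 hz).2)⟩
    | fls => simp [trF, reSem, semF]
    | box e ψ =>
        simp only [trF, reSem, semF]
        constructor
        · rintro ⟨rfl, h⟩
          refine ⟨rfl, fun z hz => ?_⟩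
          by_contra hn
          exact h z ⟨z, (trT_sem f S e x z).2 hz, rfl, fun w hw =>
            hn (((trF_sem f S ψ z w).1 hw).2)⟩
        · rintro ⟨rfl, h⟩
          refine ⟨rfl, fun w ⟨z, hz, hzw, hw⟩ => ?_⟩
          exact hw z ((trF_sem f S ψ z z).2 ⟨rfl, h z ((trT_sem f S e x z).1 hz)⟩)
  theorem trT_sem {A P A' W : Type} (f : P → A') (S : GStruct (A ⊕ A') P W)
      (e : Trm A P) :
      ∀ x y, reSem S.rel (trT f e) x y ↔ semT (derive f S) e x y := by
    intro x y
    cases e with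
    | tv a => simp [trT, reSem, semT, derive]
    | comp e g =>
        simp only [trT, reSem, semT]
        exact exists_congr fun z => and_congr (trT_sem f S e x z) (trT_sem f S g z y)
    | union e g =>
        simp only [trT, reSem, semT]
        exact or_congr (trT_sem f S e x y) (trT_sem f S g x y)
    | plus e =>
        simp only [trT, reSem, semT]
        exact transGen_iff_of_iff (trT_sem f S e)
    | adom e =>
        simp only [trT, reSem, semT]
        exact and_congr Iff.rfl (forall_congr' fun z => not_congr (trT_sem f S e x z))
    | capId e =>
        simp only [trT, reSem, semT]
        exact and_congr (trT_sem f S e x y) Iff.rfl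
    | capNid e =>
        simp only [trT, reSem, semT]
        exact and_congr (trT_sem f S e x y) Iff.rfl
    | test ψ =>
        simp only [trT, semT]
        rw [trF_sem f S ψ]
end

theorem tr_equation_valid_iff_formula_valid
    {A P A' : Type} (f : P → A') (hf : Function.Injective f) (φ : Fml A P) :
    (∀ (W : Type) (S : GStruct (A ⊕ A') P W), FinLin S →
      ∀ x y : W, reSem S.rel (trF f φ) x y ↔ reSem S.rel RE.one x y) ↔
    (∀ (W : Type) (S : GStruct A P W), FinLin S → ∀ x : W, semF S φ x) := by
  constructor
  · intro h W S hFL x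
    obtain ⟨hne, hfin, hrefl, htrans, hanti, htot⟩ := hFL
    let S'' : GStruct (A ⊕ A') P W :=
      { U := S.U
        rel := fun b => match b with
          | Sum.inl a => S.rel a
          | Sum.inr a' => fun u v => u = v ∧ ∃ p, f p = a' ∧ S.val p u
        rel_sub := fun b x y hb => by
          cases b with
          | inl a => exact S.rel_sub a x y hb
          | inr a' => exact hb.1 ▸ hrefl x
        val := S.val }
    have hFL'' : FinLin S'' := ⟨hne, hfin, hrefl, htrans, hanti, htot⟩
    have heq : derive f S'' = S := by
      obtain ⟨U, rel, rs, val⟩ := S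
      unfold derive
      congr 1
      funext p u
      apply propext
      constructor
      · rintro ⟨z, rfl, p', hp', hv⟩
        exact hf hp' ▸ hv
      · intro hv
        exact ⟨u, rfl, p, rfl, hv⟩
    have := ((h W S'' hFL'' x x).2 rfl)
    have := ((trF_sem f S'' φ x x).1 this).2
    rwa [heq] at this
  · intro h W S hFL x y
    obtain ⟨hne, hfin, hrefl, htrans, hanti, htot⟩ := hFL
    have hFL' : FinLin (derive f S) := ⟨hne, hfin, hrefl, htrans, hanti, htot⟩
    rw [trF_sem f S φ]
    constructor
    · rintro ⟨rfl, -⟩; rfl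
    · rintro rfl
      exact ⟨rfl, h W (derive f S) hFL' x⟩
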